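/- The quotient of SL(2,Z) by its commutator subgroup is cyclic of order 12, generated by the image of the matrix T = [[1,1],[0,1]]. -/

import Mathlib

set_option autoImplicit false
set_option maxHeartbeats 4000000
set_option maxRecDepth 100000

open Matrix MatrixGroups

namespace SL2ZAbelAux

open ModularGroup Subgroup

/-! ### Generation of `SL(2,ℤ)` by `S` and `T` -/

lemma SmulS : S * S = ⟨!![-1,0;0,-1], by norm_num [Matrix.det_fin_two_of]⟩ := by
  ext i j
  rw [Matrix.SpecialLinearGroup.coe_mul, coe_S]
  fin_cases i <;> fin_cases j <;> simp [Matrix.mul_apply, Fin.sum_univ_two]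

lemma Tzpow_mul_apply (q : ℤ) (A : SL(2,ℤ)) :
    (T ^ q * A).1 0 0 = A.1 0 0 + q * A.1 1 0 := by
  rw [Matrix.SpecialLinearGroup.coe_mul, coe_T_zpow, Matrix.mul_apply, Fin.sum_univ_two]
  simp

lemma S_mul_apply (A : SL(2,ℤ)) : (S * A).1 1 0 = A.1 0 0 := by
  rw [Matrix.SpecialLinearGroup.coe_mul, coe_S, Matrix.mul_apply, Fin.sum_univ_two]
  simp

lemma mem_closure_S_T (A : SL(2,ℤ)) : A ∈ Subgroup.closure {S, T} := by
  have hS : S ∈ Subgroup.closure {S, T} := Subgroup.subset_closure (by simp)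
  have hT : T ∈ Subgroup.closure {S, T} := Subgroup.subset_closure (by simp)
  suffices h : ∀ n (A : SL(2,ℤ)), (A.1 1 0).natAbs = n → A ∈ Subgroup.closure {S, T} from h _ A rfl
  intro n
  induction n using Nat.strong_induction_on with
  | _ n ih =>
    intro A hA
    by_cases hc : A.1 1 0 = 0
    · have hdet : A.1.det = 1 := A.2
      rw [Matrix.det_fin_two, hc, mul_zero, sub_zero] at hdet
      rcases Int.mul_eq_one_iff_eq_one_or_neg_one.mp hdet with ⟨ha, hd⟩ | ⟨ha, hd⟩
      · have : A = T ^ (A.1 0 1) := by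
          ext i j
          fin_cases i <;> fin_cases j <;> simp [coe_T_zpow, ha, hd, hc]
        rw [this]; exact zpow_mem hT _
      · have : A = S * S * T ^ (-(A.1 0 1)) := by
          ext i j
          rw [SmulS]
          erw [Matrix.SpecialLinearGroup.coe_mul, coe_T_zpow]
          fin_cases i <;> fin_cases j <;>
            simp [Matrix.SpecialLinearGroup.coe_mul, coe_T_zpow, ha, hd, hc,
              Matrix.mul_apply, Fin.sum_univ_two]
        rw [this]
        exact mul_mem (mul_mem hS hS) (zpow_mem hT _)
    · set a := A.1 0 0 with ha
      set c := A.1 1 0 with hcdef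
      set q := a / c with hq
      set B := S * (T ^ (-q) * A) with hB
      have hBc : (B.1 1 0).natAbs = (a % c).natAbs := by
        rw [hB, S_mul_apply, Tzpow_mul_apply, ← ha, ← hcdef]
        congr 1
        rw [Int.emod_def, hq]; ring
      have hmodlt : (a % c).natAbs < c.natAbs := by
        have h1 : 0 ≤ a % c := Int.emod_nonneg a hc
        have h2 : a % c < |c| := Int.emod_lt_abs a hc
        rcases abs_cases c with ⟨h3,_⟩|⟨h3,_⟩ <;> omega
      have hlt : (a % c).natAbs < n := by rw [← hA]; exact hmodlt
      have hBmem : B ∈ Subgroup.closure {S, T} := ih _ hlt B hBc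
      have hAeq : A = T ^ q * (S⁻¹ * B) := by
        rw [hB]; group
      rw [hAeq]
      exact mul_mem (zpow_mem hT _) (mul_mem (inv_mem hS) hBmem)

/-! ### Matrix relations -/

lemma S_pow_four : S ^ 4 = 1 := by
  ext i j
  simp only [pow_succ, pow_zero, one_mul, Matrix.SpecialLinearGroup.coe_mul, coe_S,
    Matrix.SpecialLinearGroup.coe_one]
  fin_cases i <;> fin_cases j <;> simp [Matrix.mul_apply, Fin.sum_univ_two]

lemma ST_pow_three : (S * T) ^ 3 = S ^ 2 := by
  ext i j
  simp only [pow_succ, pow_zero, one_mul, Matrix.SpecialLinearGroup.coe_mul, coe_S, coe_T]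
  fin_cases i <;> fin_cases j <;> simp [Matrix.mul_apply, Fin.sum_univ_two]

/-! ### Abelian quotients detecting orders 3 and 4 -/

def g3 : SL(2, ZMod 3) →* Multiplicative (ZMod 3) where
  toFun A := Multiplicative.ofAdd (A.1 0 0 * A.1 1 0 + A.1 0 1 * A.1 1 1
    + A.1 1 0 * A.1 1 1 + 2 * A.1 0 1 * A.1 1 0 * A.1 1 0 * A.1 1 1)
  map_one' := by decide
  map_mul' := by decide

def g4 : SL(2, ZMod 4) →* Multiplicative (ZMod 4) where
  toFun A := Multiplicative.ofAdd (2 + A.1 0 0 + 3 * A.1 0 1 + 2 * A.1 1 0 + 2 * A.1 1 1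
    + A.1 0 0 * A.1 1 0 + 3 * A.1 0 0 * A.1 1 1 + A.1 0 1 * A.1 1 1
    + A.1 0 0 * A.1 0 1 * A.1 1 0 + A.1 0 0 * A.1 0 1 * A.1 1 1)
  map_one' := by decide
  map_mul' := by decide

def φ3 : SL(2,ℤ) →* Multiplicative (ZMod 3) :=
  g3.comp (Matrix.SpecialLinearGroup.map (Int.castRingHom (ZMod 3)))

def φ4 : SL(2,ℤ) →* Multiplicative (ZMod 4) :=
  g4.comp (Matrix.SpecialLinearGroup.map (Int.castRingHom (ZMod 4)))

lemma φ3_T : φ3 T = Multiplicative.ofAdd (1 : ZMod 3) := by decide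

lemma φ4_T : φ4 T = Multiplicative.ofAdd (1 : ZMod 4) := by decide

end SL2ZAbelAux

/-- The quotient of `SL(2,ℤ)` by its commutator subgroup (i.e. its abelianization)
is cyclic of order 12, generated by the image of `T = [[1,1],[0,1]]`. -/
theorem abelianization_SL2Z_cyclic_order_twelve :
    Nat.card (Abelianization SL(2,ℤ)) = 12 ∧
    Subgroup.zpowers (Abelianization.of ModularGroup.T) = ⊤ := by
  open SL2ZAbelAux ModularGroup in
  set t := Abelianization.of T with htdef
  -- the image of S is t⁻³
  have hs : Abelianization.of S = (t ^ 3)⁻¹ := by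
    have h : (Abelianization.of S * t) ^ 3 = (Abelianization.of S) ^ 2 := by
      rw [htdef, ← _root_.map_mul, ← map_pow, ← map_pow, ST_pow_three]
    rw [mul_pow] at h
    have h2 : (Abelianization.of S) ^ 2 * (Abelianization.of S * t ^ 3)
        = (Abelianization.of S) ^ 2 * 1 := by
      calc (Abelianization.of S) ^ 2 * (Abelianization.of S * t ^ 3)
          = Abelianization.of S ^ 3 * t ^ 3 := by group
        _ = (Abelianization.of S) ^ 2 := h
        _ = (Abelianization.of S) ^ 2 * 1 := (mul_one _).symm
    exact eq_inv_of_mul_eq_one_left (mul_left_cancel h2)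
  -- t has order dividing 12
  have ht12 : t ^ 12 = 1 := by
    have h4 : (Abelianization.of S) ^ 4 = 1 := by
      rw [← map_pow, S_pow_four, _root_.map_one]
    rw [hs] at h4
    have h5 : (t ^ 12)⁻¹ = 1 := by rw [← h4]; group
    exact inv_eq_one.mp h5
  -- t generates the abelianization
  have htop : Subgroup.zpowers t = ⊤ := by
    rw [Subgroup.eq_top_iff']
    intro x
    obtain ⟨A, rfl⟩ : ∃ A : SL(2,ℤ), Abelianization.of A = x :=
      Quot.inductionOn x fun a => ⟨a, rfl⟩
    have h5 : Abelianization.of A ∈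
        Subgroup.map Abelianization.of (Subgroup.closure {S, T}) :=
      Subgroup.mem_map_of_mem _ (mem_closure_S_T A)
    rw [MonoidHom.map_closure] at h5
    refine (Subgroup.closure_le (Subgroup.zpowers t)).mpr ?_ h5
    rintro y ⟨z, hz, rfl⟩
    rcases hz with rfl | rfl
    · rw [hs]
      exact (Subgroup.zpowers t).inv_mem (pow_mem (Subgroup.mem_zpowers t) 3)
    · exact Subgroup.mem_zpowers t
  refine ⟨?_, htop⟩
  -- compute the cardinality
  have hcard : Nat.card (Abelianization SL(2,ℤ)) = orderOf t := by
    rw [← Nat.card_zpowers, htop, Subgroup.card_top]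
  rw [hcard]
  have hdvd : orderOf t ∣ 12 := orderOf_dvd_of_pow_eq_one ht12
  have h3 : (3 : ℕ) ∣ orderOf t := by
    have hmap := orderOf_map_dvd (Abelianization.lift φ3) t
    rw [htdef, Abelianization.lift_apply_of, φ3_T, orderOf_ofAdd_eq_addOrderOf,
      ZMod.addOrderOf_one] at hmap
    exact hmap
  have h4 : (4 : ℕ) ∣ orderOf t := by
    have hmap := orderOf_map_dvd (Abelianization.lift φ4) t
    rw [htdef, Abelianization.lift_apply_of, φ4_T, orderOf_ofAdd_eq_addOrderOf,
      ZMod.addOrderOf_one] at hmap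
    exact hmap
  have h12 : (12 : ℕ) ∣ orderOf t := by
    have := Nat.Coprime.mul_dvd_of_dvd_of_dvd (by norm_num : Nat.Coprime 3 4) h3 h4
    simpa using this
  exact Nat.dvd_antisymm hdvd h12
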